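/- Let u_max > 0 > u_min be reals and let p_s, v_s, p_e, v_e be reals with v_s ≥ 0, v_e ≥ 0 and p_e > p_s. Define p_c = (v_e^2 − v_s^2 + 2(u_max·p_s − u_min·p_e)) / (2(u_max − u_min)), suppose v_s^2 + 2·u_max·(p_c − p_s) ≥ 0, set v_c = sqrt(v_s^2 + 2·u_max·(p_c − p_s)), and suppose v_c ≥ v_s and v_c ≥ v_e. Let R = (v_c − v_s)/u_max + (v_e − v_c)/u_min. Then for all reals t_s < t_e and all functions p, v : ℝ → ℝ such that p is differentiable on [t_s, t_e] with p'(t) = v(t) there, v is differentiable on [t_s, t_e] with u_min ≤ v'(t) ≤ u_max for all t there, p(t_s) = p_s, v(t_s) = v_s, p(t_e) = p_e and v(t_e) = v_e, one has t_e − t_s ≥ R. -/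
import Mathlib

open intervalIntegral MeasureTheory

private lemma lin_int (c d e a b : ℝ) :
    ∫ t in a..b, (c + d * (t - e)) = c * (b - a) + d * ((b - e) ^ 2 - (a - e) ^ 2) / 2 := by
  have hcont : Continuous fun t : ℝ => d * (t - e) :=
    continuous_const.mul (continuous_id.sub continuous_const)
  have h1 : ∫ t in a..b, (c + d * (t - e)) =
      (∫ _t in a..b, c) + ∫ t in a..b, d * (t - e) :=
    intervalIntegral.integral_add intervalIntegrable_const (hcont.intervalIntegrable a b)
  have h2 : ∫ t in a..b, d * (t - e) = d * ∫ t in a..b, (t - e) :=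
    intervalIntegral.integral_const_mul _ _
  have h3 : ∫ t in a..b, (t - e) = ((b - e) ^ 2 - (a - e) ^ 2) / 2 := by
    have h := intervalIntegral.integral_comp_sub_right (a := a) (b := b) (fun x => x) e
    rw [h, integral_id]
  rw [h1, h2, h3, intervalIntegral.integral_const, smul_eq_mul]
  ring

set_option maxHeartbeats 2000000 in
/-- Release time problem (Problem 2, Lemmas 1–2, Proposition 1): R is a lower
bound on the travel time of every admissible trajectory through the zone with
the given boundary states. -/
theorem stmt_10
    (u_max u_min : ℝ) (hmax : 0 < u_max) (hmin : u_min < 0)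
    (p_s v_s p_e v_e : ℝ) (hvs : 0 ≤ v_s) (hve : 0 ≤ v_e) (hpe : p_s < p_e)
    (p_c v_c R : ℝ)
    (hpc : p_c = (v_e ^ 2 - v_s ^ 2 + 2 * (u_max * p_s - u_min * p_e)) /
      (2 * (u_max - u_min)))
    (hnn : 0 ≤ v_s ^ 2 + 2 * u_max * (p_c - p_s))
    (hvc : v_c = Real.sqrt (v_s ^ 2 + 2 * u_max * (p_c - p_s)))
    (hvcs : v_s ≤ v_c) (hvce : v_e ≤ v_c)
    (hR : R = (v_c - v_s) / u_max + (v_e - v_c) / u_min) :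
    ∀ (t_s t_e : ℝ), t_s < t_e →
      ∀ (p v : ℝ → ℝ),
        (∀ t ∈ Set.Icc t_s t_e, HasDerivAt p (v t) t) →
        (∀ t ∈ Set.Icc t_s t_e, DifferentiableAt ℝ v t) →
        (∀ t ∈ Set.Icc t_s t_e, u_min ≤ deriv v t ∧ deriv v t ≤ u_max) →
        p t_s = p_s → v t_s = v_s → p t_e = p_e → v t_e = v_e →
        t_e - t_s ≥ R := by
  intro t_s t_e hts p v hp hv hder hpts hvts hpte hvte
  have hmax' : u_max ≠ 0 := ne_of_gt hmax
  have hmin' : u_min ≠ 0 := ne_of_lt hmin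
  have hmm : u_max * u_min < 0 := mul_neg_of_pos_of_neg hmax hmin
  have hvc0 : 0 ≤ v_c := le_trans hvs hvcs
  have hT0 : 0 < t_e - t_s := by linarith
  -- squared value of v_c and the two distance identities
  have hvc2 : v_c ^ 2 = v_s ^ 2 + 2 * u_max * (p_c - p_s) := by
    rw [hvc]; exact Real.sq_sqrt hnn
  have hvc2' : v_c ^ 2 = v_e ^ 2 + 2 * u_min * (p_c - p_e) := by
    rw [hvc2, hpc]
    have h : u_max - u_min ≠ 0 := ne_of_gt (by linarith)
    field_simp
    ring
  have hG : (v_c ^ 2 - v_s ^ 2) / (2 * u_max) + (v_e ^ 2 - v_c ^ 2) / (2 * u_min)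
      = p_e - p_s := by
    have h1 : (v_c ^ 2 - v_s ^ 2) / (2 * u_max) = p_c - p_s := by
      rw [hvc2]; field_simp; try ring
    have h2 : (v_e ^ 2 - v_c ^ 2) / (2 * u_min) = p_e - p_c := by
      rw [hvc2']; field_simp; try ring
    rw [h1, h2]; ring
  -- the crossing speed of the two bounding lines
  obtain ⟨X, hX⟩ : ∃ x : ℝ,
      x = ((t_e - t_s) + v_s / u_max - v_e / u_min) / (1 / u_max - 1 / u_min) := ⟨_, rfl⟩
  have hc : 0 < 1 / u_max - 1 / u_min := by
    have h1 : 0 < 1 / u_max := by positivity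
    have h2 : 1 / u_min < 0 := div_neg_of_pos_of_neg one_pos hmin
    linarith
  have hc' : 1 / u_max - 1 / u_min ≠ 0 := ne_of_gt hc
  have hXval : X * (1 / u_max - 1 / u_min) = (t_e - t_s) + v_s / u_max - v_e / u_min :=
    by rw [hX]; exact div_mul_cancel₀ _ hc'
  have hkey : (X - v_s) / u_max + (v_e - X) / u_min = t_e - t_s := by
    have h : (X - v_s) / u_max + (v_e - X) / u_min
        = X * (1 / u_max - 1 / u_min) - v_s / u_max + v_e / u_min := by ring
    rw [h, hXval]; ring
  -- pointwise bounds on v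
  have hC : ContinuousOn v (Set.Icc t_s t_e) := fun t ht =>
    (hv t ht).continuousAt.continuousWithinAt
  have hD : DifferentiableOn ℝ v (interior (Set.Icc t_s t_e)) := fun t ht =>
    (hv t ((interior_subset : interior (Set.Icc t_s t_e) ⊆ _) ht)).differentiableWithinAt
  have hub1 : ∀ t ∈ Set.Icc t_s t_e, v t ≤ v_s + u_max * (t - t_s) := by
    intro t ht
    have h := (convex_Icc t_s t_e).image_sub_le_mul_sub_of_deriv_le hC hD
      (fun x hx => (hder x (by rw [interior_Icc] at hx; exact Set.Ioo_subset_Icc_self hx)).2)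
      t_s ⟨le_rfl, hts.le⟩ t ht ht.1
    rw [hvts] at h
    linarith
  have hub2 : ∀ t ∈ Set.Icc t_s t_e, v t ≤ v_e + u_min * (t - t_e) := by
    intro t ht
    have h := (convex_Icc t_s t_e).mul_sub_le_image_sub_of_le_deriv hC hD
      (fun x hx => (hder x (by rw [interior_Icc] at hx; exact Set.Ioo_subset_Icc_self hx)).1)
      t ht t_e ⟨hts.le, le_rfl⟩ ht.2
    rw [hvte] at h
    nlinarith
  -- integrability and FTC
  have hIntv : ∀ a ∈ Set.Icc t_s t_e, ∀ b ∈ Set.Icc t_s t_e,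
      IntervalIntegrable v volume a b := fun a ha b hb =>
    (hC.mono (Set.uIcc_subset_Icc ha hb)).intervalIntegrable
  have hFTC : ∫ t in t_s..t_e, v t = p_e - p_s := by
    rw [← hpte, ← hpts]
    exact intervalIntegral.integral_eq_sub_of_hasDerivAt
      (fun t ht => hp t (by rwa [Set.uIcc_of_le hts.le] at ht))
      (hIntv t_s ⟨le_rfl, hts.le⟩ t_e ⟨hts.le, le_rfl⟩)
  -- the main integral bound, for any splitting point m
  have hbound : ∀ m, t_s ≤ m → m ≤ t_e →
      p_e - p_s ≤ v_s * (m - t_s) + u_max * (m - t_s) ^ 2 / 2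
        + (v_e * (t_e - m) - u_min * (m - t_e) ^ 2 / 2) := by
    intro m hm1 hm2
    have hmI : m ∈ Set.Icc t_s t_e := ⟨hm1, hm2⟩
    have hi1 := hIntv t_s ⟨le_rfl, hts.le⟩ m hmI
    have hi2 := hIntv m hmI t_e ⟨hts.le, le_rfl⟩
    have hsum : (∫ t in t_s..m, v t) + ∫ t in m..t_e, v t = p_e - p_s := by
      rw [intervalIntegral.integral_add_adjacent_intervals hi1 hi2, hFTC]
    have hle1 : (∫ t in t_s..m, v t) ≤ ∫ t in t_s..m, (v_s + u_max * (t - t_s)) := by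
      have hcont : Continuous fun t : ℝ => v_s + u_max * (t - t_s) :=
        continuous_const.add (continuous_const.mul (continuous_id.sub continuous_const))
      exact intervalIntegral.integral_mono_on hm1 hi1 (hcont.intervalIntegrable t_s m)
        (fun x hx => hub1 x ⟨hx.1, le_trans hx.2 hm2⟩)
    have hle2 : (∫ t in m..t_e, v t) ≤ ∫ t in m..t_e, (v_e + u_min * (t - t_e)) := by
      have hcont : Continuous fun t : ℝ => v_e + u_min * (t - t_e) :=
        continuous_const.add (continuous_const.mul (continuous_id.sub continuous_const))
      exact intervalIntegral.integral_mono_on hm2 hi2 (hcont.intervalIntegrable m t_e)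
        (fun x hx => hub2 x ⟨le_trans hm1 hx.1, hx.2⟩)
    have e1 : ∫ t in t_s..m, (v_s + u_max * (t - t_s))
        = v_s * (m - t_s) + u_max * (m - t_s) ^ 2 / 2 := by
      rw [lin_int]; ring
    have e2 : ∫ t in m..t_e, (v_e + u_min * (t - t_e))
        = v_e * (t_e - m) - u_min * (m - t_e) ^ 2 / 2 := by
      rw [lin_int]; ring
    rw [e1] at hle1; rw [e2] at hle2
    linarith
  rcases le_or_gt v_s X with h1 | h1
  · rcases le_or_gt v_e X with h2 | h2
    · -- Case A: the crossing point lies in the interval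
      obtain ⟨m, hm⟩ : ∃ x : ℝ, x = t_s + (X - v_s) / u_max := ⟨_, rfl⟩
      have hd1 : m - t_s = (X - v_s) / u_max := by rw [hm]; ring
      have hd2 : m - t_e = (X - v_e) / u_min := by
        have h : m - t_e = (X - v_s) / u_max - (t_e - t_s) := by rw [hm]; ring
        rw [h, ← hkey]; ring
      have hm1 : t_s ≤ m := by
        have h : 0 ≤ (X - v_s) / u_max := div_nonneg (by linarith) hmax.le
        rw [hm]; linarith
      have hm2 : m ≤ t_e := by
        have h : (X - v_e) / u_min ≤ 0 :=
          div_nonpos_of_nonneg_of_nonpos (by linarith) hmin.le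
        linarith [hd2]
      have hb := hbound m hm1 hm2
      rw [hd1, hd2] at hb
      have hGX : v_s * ((X - v_s) / u_max) + u_max * ((X - v_s) / u_max) ^ 2 / 2
          + (v_e * (t_e - m) - u_min * ((X - v_e) / u_min) ^ 2 / 2)
          = (X ^ 2 - v_s ^ 2) / (2 * u_max) + (v_e ^ 2 - X ^ 2) / (2 * u_min) := by
        have ht : t_e - m = -((X - v_e) / u_min) := by rw [← hd2]; ring
        rw [ht]
        field_simp
        ring
      rw [hGX] at hb
      have hdiff : (X ^ 2 - v_s ^ 2) / (2 * u_max) + (v_e ^ 2 - X ^ 2) / (2 * u_min)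
          - ((v_c ^ 2 - v_s ^ 2) / (2 * u_max) + (v_e ^ 2 - v_c ^ 2) / (2 * u_min))
          = (X ^ 2 - v_c ^ 2) * (u_min - u_max) / (2 * (u_max * u_min)) := by
        field_simp
        ring
      have hge : 0 ≤ (X ^ 2 - v_c ^ 2) * (u_min - u_max) / (2 * (u_max * u_min)) := by
        rw [← hdiff]; rw [hG]; linarith
      have hsq : v_c ^ 2 ≤ X ^ 2 := by
        by_contra hcon
        push_neg at hcon
        have hnum : 0 < (X ^ 2 - v_c ^ 2) * (u_min - u_max) :=
          mul_pos_of_neg_of_neg (by linarith) (by linarith)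
        have hden : 2 * (u_max * u_min) < 0 := by linarith
        have := div_neg_of_pos_of_neg hnum hden
        linarith
      have hXc : v_c ≤ X := by
        by_contra hcon
        push_neg at hcon
        have hX0 : 0 ≤ X := le_trans hvs h1
        nlinarith
      have hfin : (t_e - t_s) - R = (X - v_c) * (u_min - u_max) / (u_max * u_min) := by
        rw [hR, ← hkey]
        field_simp
        ring
      have hq : 0 ≤ (X - v_c) * (u_min - u_max) / (u_max * u_min) :=
        div_nonneg_of_nonpos
          (mul_nonpos_of_nonneg_of_nonpos (by linarith) (by linarith)) hmm.le
      linarith [hfin]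
    · -- Case C: v_s ≤ X < v_e, pure acceleration bound gives a contradiction
      exfalso
      have hb := hbound t_e hts.le le_rfl
      have hb' : p_e - p_s ≤ v_s * (t_e - t_s) + u_max * (t_e - t_s) ^ 2 / 2 := by
        have hz : v_s * (t_e - t_s) + u_max * (t_e - t_s) ^ 2 / 2
            + (v_e * (t_e - t_e) - u_min * (t_e - t_e) ^ 2 / 2)
            = v_s * (t_e - t_s) + u_max * (t_e - t_s) ^ 2 / 2 := by ring
        linarith [hz ▸ hb]
      obtain ⟨S, hS⟩ : ∃ x : ℝ, x = (v_e - v_s) / u_max := ⟨_, rfl⟩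
      have hSid : u_max * S = v_e - v_s := by rw [hS]; field_simp
      have hTS : t_e - t_s < S := by
        have heq : (t_e - t_s) - S = (X - v_e) * (u_min - u_max) / (u_max * u_min) := by
          rw [hS, ← hkey]; field_simp; ring
        have hnum : 0 < (X - v_e) * (u_min - u_max) :=
          mul_pos_of_neg_of_neg (by linarith) (by linarith)
        have := div_neg_of_pos_of_neg hnum hmm
        linarith
      have hGe : (v_e ^ 2 - v_s ^ 2) / (2 * u_max) ≤ p_e - p_s := by
        have hdiff : ((v_c ^ 2 - v_s ^ 2) / (2 * u_max) + (v_e ^ 2 - v_c ^ 2) / (2 * u_min))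
            - (v_e ^ 2 - v_s ^ 2) / (2 * u_max)
            = (v_c ^ 2 - v_e ^ 2) * (u_min - u_max) / (2 * (u_max * u_min)) := by
          field_simp; ring
        have hnum : (v_c ^ 2 - v_e ^ 2) * (u_min - u_max) ≤ 0 :=
          mul_nonpos_of_nonneg_of_nonpos (by nlinarith) (by linarith)
        have hq : 0 ≤ (v_c ^ 2 - v_e ^ 2) * (u_min - u_max) / (2 * (u_max * u_min)) :=
          div_nonneg_of_nonpos hnum (by linarith)
        rw [← hdiff] at hq
        linarith [hG]
      have hveq : v_e = v_s + u_max * S := by linarith [hSid]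
      have hGe2 : (v_e ^ 2 - v_s ^ 2) / (2 * u_max) = v_s * S + u_max * S ^ 2 / 2 := by
        rw [hveq]; field_simp; ring
      have hST : 0 < S := lt_trans hT0 hTS
      have h5 : 0 < S - (t_e - t_s) := by linarith
      have h6 : 0 < v_s + u_max * (S + (t_e - t_s)) / 2 := by
        have := mul_pos hmax (show 0 < S + (t_e - t_s) by linarith)
        linarith
      nlinarith [mul_pos h5 h6]
  · -- Case B: X < v_s, pure deceleration bound gives a contradiction
    exfalso
    have hb := hbound t_s le_rfl hts.le
    have hb' : p_e - p_s ≤ v_e * (t_e - t_s) - u_min * (t_e - t_s) ^ 2 / 2 := by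
      have hz : v_s * (t_s - t_s) + u_max * (t_s - t_s) ^ 2 / 2
          + (v_e * (t_e - t_s) - u_min * (t_s - t_e) ^ 2 / 2)
          = v_e * (t_e - t_s) - u_min * (t_e - t_s) ^ 2 / 2 := by ring
      linarith [hz ▸ hb]
    obtain ⟨S, hS⟩ : ∃ x : ℝ, x = (v_e - v_s) / u_min := ⟨_, rfl⟩
    have hSid : u_min * S = v_e - v_s := by rw [hS]; field_simp
    have hTS : t_e - t_s < S := by
      have heq : (t_e - t_s) - S = (X - v_s) * (u_min - u_max) / (u_max * u_min) := by
        rw [hS, ← hkey]; field_simp; ring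
      have hnum : 0 < (X - v_s) * (u_min - u_max) :=
        mul_pos_of_neg_of_neg (by linarith) (by linarith)
      have := div_neg_of_pos_of_neg hnum hmm
      linarith
    have hGs : (v_e ^ 2 - v_s ^ 2) / (2 * u_min) ≤ p_e - p_s := by
      have hdiff : ((v_c ^ 2 - v_s ^ 2) / (2 * u_max) + (v_e ^ 2 - v_c ^ 2) / (2 * u_min))
          - (v_e ^ 2 - v_s ^ 2) / (2 * u_min)
          = (v_c ^ 2 - v_s ^ 2) * (u_min - u_max) / (2 * (u_max * u_min)) := by
        field_simp; ring
      have hnum : (v_c ^ 2 - v_s ^ 2) * (u_min - u_max) ≤ 0 :=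
        mul_nonpos_of_nonneg_of_nonpos (by nlinarith) (by linarith)
      have hq : 0 ≤ (v_c ^ 2 - v_s ^ 2) * (u_min - u_max) / (2 * (u_max * u_min)) :=
        div_nonneg_of_nonpos hnum (by linarith)
      linarith [hG, hdiff.symm ▸ hq]
    have hveq : v_s = v_e - u_min * S := by linarith [hSid]
    have hGs2 : (v_e ^ 2 - v_s ^ 2) / (2 * u_min) = v_e * S - u_min * S ^ 2 / 2 := by
      rw [hveq]; field_simp; ring
    have hST : 0 < S := lt_trans hT0 hTS
    have h5 : 0 < S - (t_e - t_s) := by linarith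
    have h6 : 0 < v_e - u_min * (S + (t_e - t_s)) / 2 := by
      have := mul_pos (neg_pos.mpr hmin) (show 0 < S + (t_e - t_s) by linarith)
      nlinarith
    nlinarith [mul_pos h5 h6]
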